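/- Let f be a convex function of n variables on a cube, and let (x₁,...,xₙ) be an abelian n-tuple of self-adjoint matrices in the domain of f. Then for any state φ (positive linear functional with φ(1)=1) on the matrix algebra, f(φ(x₁),...,φ(xₙ)) ≤ φ(f(x₁,...,xₙ)). -/
import Mathlib


open Matrix
open scoped ComplexOrder

/-- Jensen's inequality under a state: if `f` is convex on a cube, `(x₁,…,xₙ)` is an
abelian `n`-tuple of self-adjoint matrices with joint spectrum in the cube (encoded by a
simultaneous diagonalization, with `f(x₁,…,xₙ)` given by multivariate functional
calculus), and `φ` is a state on the matrix algebra, then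
`f(φ(x₁),…,φ(xₙ)) ≤ φ(f(x₁,…,xₙ))`. -/
theorem jensen_state (n m : ℕ)
    (I : Fin n → Set ℝ) (hI : ∀ i, (I i).OrdConnected)
    (f : (Fin n → ℝ) → ℝ) (hf : ConvexOn ℝ (Set.univ.pi I) f)
    (x : Fin n → Matrix (Fin m) (Fin m) ℂ)
    (U : Matrix (Fin m) (Fin m) ℂ) (hU : U ∈ Matrix.unitaryGroup (Fin m) ℂ)
    (lam : Fin n → Fin m → ℝ)
    (hx : ∀ i, x i = U * Matrix.diagonal (fun j => (lam i j : ℂ)) * star U)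
    (hspec : ∀ j, (fun i => lam i j) ∈ Set.univ.pi I)
    (fx : Matrix (Fin m) (Fin m) ℂ)
    (hfx : fx = U * Matrix.diagonal (fun j => (f (fun i => lam i j) : ℂ)) * star U)
    (φ : Matrix (Fin m) (Fin m) ℂ →ₗ[ℂ] ℂ)
    (hφpos : ∀ a : Matrix (Fin m) (Fin m) ℂ, a.PosSemidef → 0 ≤ φ a)
    (hφ1 : φ 1 = 1) :
    f (fun i => (φ (x i)).re) ≤ (φ fx).re := by
  classical
  set P : Fin m → Matrix (Fin m) (Fin m) ℂ :=
    fun j => Matrix.diagonal (Pi.single j 1) with hP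
  set Q : Fin m → Matrix (Fin m) (Fin m) ℂ := fun j => U * P j * star U with hQ
  have hdiag : ∀ c : Fin m → ℂ, Matrix.diagonal c = ∑ j, c j • P j := by
    intro c
    ext a b
    simp only [hP, Matrix.sum_apply, Matrix.smul_apply, Matrix.diagonal_apply,
      smul_eq_mul, Pi.single_apply]
    by_cases h : a = b
    · subst h; simp
    · simp [h]
  have hconj : ∀ c : Fin m → ℂ,
      U * Matrix.diagonal c * star U = ∑ j, c j • Q j := by
    intro c
    rw [hdiag c, Finset.mul_sum, Finset.sum_mul]
    refine Finset.sum_congr rfl fun j _ => ?_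
    simp [hQ, Matrix.mul_smul, Matrix.smul_mul]
  -- weights
  set w : Fin m → ℝ := fun j => (φ (Q j)).re with hw
  have hQpos : ∀ j, (Q j).PosSemidef := by
    intro j
    have hPpos : (P j).PosSemidef := by
      rw [hP]
      refine Matrix.posSemidef_diagonal_iff.mpr fun i => ?_
      by_cases h : i = j
      · subst h; simp
      · simp [Pi.single_apply, h]
    have := hPpos.mul_mul_conjTranspose_same U
    simpa [hQ, Matrix.star_eq_conjTranspose] using this
  have hw0 : ∀ j ∈ Finset.univ, (0:ℝ) ≤ w j := fun j _ =>
    (Complex.le_def.mp (hφpos _ (hQpos j))).1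
  have hsumQ : ∑ j, Q j = 1 := by
    have : Matrix.diagonal (fun _ : Fin m => (1:ℂ)) = ∑ j, (1:ℂ) • P j := by
      simpa using hdiag (fun _ => (1:ℂ))
    have h2 : U * Matrix.diagonal (fun _ : Fin m => (1:ℂ)) * star U = ∑ j, (1:ℂ) • Q j :=
      hconj _
    simp only [Matrix.diagonal_one, one_smul] at h2
    rw [← h2, mul_one]
    exact (Matrix.mem_unitaryGroup_iff.mp hU)
  have hwsum : ∑ j ∈ Finset.univ, w j = 1 := by
    have : φ (∑ j, Q j) = 1 := by rw [hsumQ, hφ1]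
    rw [map_sum] at this
    have := congrArg Complex.re this
    simpa [hw, Complex.re_sum] using this
  have key : ∀ c : Fin m → ℝ,
      (φ (U * Matrix.diagonal (fun j => (c j : ℂ)) * star U)).re = ∑ j, w j * c j := by
    intro c
    rw [hconj, map_sum]
    rw [Complex.re_sum]
    refine Finset.sum_congr rfl fun j _ => ?_
    rw [φ.map_smul]
    simp [hw, Complex.smul_re, mul_comm]
  have hxre : ∀ i, (φ (x i)).re = ∑ j, w j * lam i j := by
    intro i; rw [hx i, key]
  have hfxre : (φ fx).re = ∑ j, w j * f (fun i => lam i j) := by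
    rw [hfx, key]
  have hpts : ∀ j ∈ Finset.univ, (fun i => lam i j) ∈ Set.univ.pi I :=
    fun j _ => hspec j
  have := hf.map_sum_le hw0 hwsum hpts
  rw [hfxre]
  refine le_trans (le_of_eq ?_) this
  congr 1
  funext i
  rw [hxre i]
  simp [Finset.sum_apply]
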